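/- For every integer N with 1 ≤ N ≤ 6, the identity 1/2 + ∑_{n=1}^∞ ∏_{k=0}^N sinc(n/(2k+1)) = ∫_0^∞ ∏_{k=0}^N sinc(x/(2k+1)) dx holds. -/

import Mathlib

open MeasureTheory Real

/-- sinc' x = sin x / x for x ≠ 0, sinc' 0 = 1. -/
noncomputable def sinc' (x : ℝ) : ℝ := if x = 0 then 1 else Real.sin x / x

namespace BW
open Complex Filter Set intervalIntegral
open scoped FourierTransform Topology

lemma sinc_zero : sinc' 0 = 1 := if_pos rfl

lemma sinc_neg (x : ℝ) : sinc' (-x) = sinc' x := by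
  unfold sinc'
  rcases eq_or_ne x 0 with h | h
  · simp [h]
  · rw [if_neg (neg_ne_zero.2 h), if_neg h, Real.sin_neg, neg_div_neg_eq]

lemma abs_sinc_le_one (x : ℝ) : |sinc' x| ≤ 1 := by
  unfold sinc'
  rcases eq_or_ne x 0 with h | h
  · simp [h]
  · rw [if_neg h, abs_div]
    rw [div_le_one (abs_pos.2 h)]
    exact Real.abs_sin_le_abs

lemma abs_sinc_le {x : ℝ} (h : x ≠ 0) : |sinc' x| ≤ 1 / |x| := by
  unfold sinc'
  rw [if_neg h, abs_div]
  gcongr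
  exact Real.abs_sin_le_one _

lemma continuous_sinc : Continuous sinc' := by
  rw [continuous_iff_continuousAt]
  intro a
  rcases eq_or_ne a 0 with rfl | ha
  · have h1 : Tendsto sinc' (nhdsWithin 0 {0}ᶜ) (nhds (sinc' 0)) := by
      have h := hasDerivAt_iff_tendsto_slope.1 (Real.hasDerivAt_sin 0)
      rw [Real.cos_zero] at h
      rw [show sinc' 0 = 1 from if_pos rfl]
      refine h.congr' ?_
      filter_upwards [self_mem_nhdsWithin] with x hx
      simp only [mem_compl_iff, mem_singleton_iff] at hx
      simp [slope, sinc', hx, Real.sin_zero, sub_zero, div_eq_inv_mul]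
    unfold ContinuousAt
    rw [← nhdsNE_sup_pure (0:ℝ)]
    exact Tendsto.sup h1 (tendsto_pure_nhds _ _)
  · have : ContinuousAt (fun x : ℝ => Real.sin x / x) a :=
      (Real.continuous_sin.continuousAt).div continuousAt_id ha
    apply this.congr
    filter_upwards [isOpen_ne.mem_nhds ha] with x hx
    simp [sinc', hx]

lemma integral_cexp_box (c : ℝ) {δ : ℝ} (hδ : 0 < δ) :
    ∫ s in (-δ)..δ, Complex.exp ((c * s : ℝ) * Complex.I) = 2 * δ * (sinc' (c * δ) : ℝ) := by
  rcases eq_or_ne c 0 with rfl | hc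
  · simp [sinc', Complex.ofReal_zero]
    norm_num
    push_cast
    ring
  · have h1 : ((c : ℂ) * Complex.I) ≠ 0 := by
      simp [Complex.ext_iff, hc]
    have h2 : ∀ s : ℝ, ((c * s : ℝ) : ℂ) * Complex.I = ((c : ℂ) * Complex.I) * (s : ℂ) := by
      intro s; push_cast; ring
    simp_rw [h2]
    rw [integral_exp_mul_complex h1]
    have hcδ : c * δ ≠ 0 := mul_ne_zero hc hδ.ne'
    rw [show sinc' (c * δ) = Real.sin (c * δ) / (c * δ) from if_neg hcδ]
    have hsin : ((Real.sin (c * δ) : ℝ) : ℂ) = Complex.sin ((c * δ : ℝ) : ℂ) :=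
      Complex.ofReal_sin _
    push_cast [hsin]
    rw [Complex.sin]
    field_simp
    ring_nf
    simp only [Complex.I_sq]
    ring_nf
    have hc' : (c:ℂ) ≠ 0 := Complex.ofReal_ne_zero.2 hc
    have hd' : (δ:ℂ) ≠ 0 := Complex.ofReal_ne_zero.2 hδ.ne'
    field_simp

lemma step {F : ℝ → ℂ} {c : ℝ} (hc : 0 ≤ c) (hFm : Measurable F) (hFi : Integrable F)
    (hsupp : ∀ ξ : ℝ, c < |ξ| → F ξ = 0) {a : ℝ} (ha : 0 < a) :
    ∃ G : ℝ → ℂ, Measurable G ∧ Integrable G ∧ Continuous G ∧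
      (∀ ξ : ℝ, c + 1 / (2 * π * a) < |ξ| → G ξ = 0) ∧
      ∀ x : ℝ, (∫ v : ℝ, Complex.exp ((2 * π * (v * x) : ℝ) * Complex.I) * G v) =
        (sinc' (x / a) : ℝ) * ∫ v : ℝ, Complex.exp ((2 * π * (v * x) : ℝ) * Complex.I) * F v := by
  have hπ : (0:ℝ) < π := Real.pi_pos
  set δ : ℝ := 1 / (2 * π * a) with hδdef
  have hδ : 0 < δ := by positivity
  have hII : ∀ u v : ℝ, IntervalIntegrable F volume u v := fun u v => hFi.intervalIntegrable
  set G : ℝ → ℂ := fun ξ => ((π * a : ℝ) : ℂ) * ∫ s in (ξ - δ)..(ξ + δ), F s with hGdef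
  -- continuity
  have hGc : Continuous G := by
    apply continuous_const.mul
    have hprim : Continuous fun y : ℝ => ∫ s in (0:ℝ)..y, F s :=
      hFi.continuous_primitive 0
    have heq : (fun ξ : ℝ => ∫ s in (ξ - δ)..(ξ + δ), F s)
        = fun ξ : ℝ => (∫ s in (0:ℝ)..(ξ + δ), F s) - ∫ s in (0:ℝ)..(ξ - δ), F s := by
      funext ξ
      rw [intervalIntegral.integral_interval_sub_left (hII _ _) (hII _ _)]
    rw [heq]
    exact (hprim.comp (continuous_id.add continuous_const)).sub
      (hprim.comp (continuous_id.sub continuous_const))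
  -- support
  have hG0 : ∀ ξ : ℝ, c + δ < |ξ| → G ξ = 0 := by
    intro ξ hξ
    have hzero : ∀ t ∈ Set.uIcc (ξ - δ) (ξ + δ), F t = (fun _ => (0:ℂ)) t := by
      intro t ht
      rw [Set.uIcc_of_le (by linarith)] at ht
      obtain ⟨ht1, ht2⟩ := ht
      have h1 : |ξ - t| ≤ δ := abs_le.2 ⟨by linarith, by linarith⟩
      have h2 : |ξ| - |t| ≤ |ξ - t| := abs_sub_abs_le_abs_sub _ _
      exact hsupp t (by linarith)
    simp only [hGdef]
    rw [intervalIntegral.integral_congr hzero, intervalIntegral.integral_zero, mul_zero]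
  -- integrability
  have hGi : Integrable G := by
    apply hGc.integrable_of_hasCompactSupport
    apply HasCompactSupport.intro (isCompact_Icc (a := -(c+δ+1)) (b := c+δ+1))
    intro x hx
    apply hG0
    simp only [Set.mem_Icc, not_and_or, not_le] at hx
    rcases hx with h | h
    · rw [abs_of_neg (by linarith)]; linarith
    · rw [abs_of_pos (by linarith)]; linarith
  refine ⟨G, hGc.measurable, hGi, hGc, hG0, ?_⟩
  -- main identity
  intro x
  set E : ℝ → ℂ := fun v => Complex.exp ((2 * π * (v * x) : ℝ) * Complex.I) with hE
  have hEnorm : ∀ v, ‖E v‖ = 1 := fun v => by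
    simp only [hE, Complex.norm_exp_ofReal_mul_I]
  have hEcont : Continuous E := by
    apply Complex.continuous_exp.comp
    fun_prop
  have hrw : ∀ v : ℝ, (∫ s in (v - δ)..(v + δ), F s) = ∫ s in Set.Ioc (-δ) δ, F (v + s) := by
    intro v
    rw [← intervalIntegral.integral_of_le (show -δ ≤ δ by linarith),
      intervalIntegral.integral_comp_add_left F v]
    norm_num [sub_eq_add_neg]
  -- product integrability
  have hprod : Integrable (Function.uncurry fun v s => E v * F (v + s))
      (volume.prod (volume.restrict (Set.Ioc (-δ) δ))) := by
    have hmeas : AEStronglyMeasurable (Function.uncurry fun v s => E v * F (v + s))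
        (volume.prod (volume.restrict (Set.Ioc (-δ) δ))) := by
      apply Measurable.aestronglyMeasurable
      exact (hEcont.measurable.comp measurable_fst).mul
        (hFm.comp (measurable_fst.add measurable_snd))
    rw [integrable_prod_iff' hmeas]
    constructor
    · refine ae_of_all _ fun s => ?_
      exact (hFi.comp_add_right s).bdd_mul hEcont.aestronglyMeasurable
        (Filter.Eventually.of_forall fun v => le_of_eq (hEnorm v))
    · have heq : (fun s => ∫ v, ‖(Function.uncurry fun v s => E v * F (v + s)) (v, s)‖)
          = fun _ : ℝ => ∫ v : ℝ, ‖F v‖ := by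
        funext s
        have h1 : ∀ v : ℝ, ‖E v * F (v + s)‖ = (fun t => ‖F t‖) (v + s) := fun v => by
          simp only [norm_mul, hEnorm, one_mul]
        simp only [Function.uncurry]
        simp_rw [h1]
        exact integral_add_right_eq_self (fun t => ‖F t‖) s
      rw [heq]
      exact integrableOn_const measure_Ioc_lt_top.ne
  have hswap := MeasureTheory.integral_integral_swap hprod
  have key : ∀ s : ℝ, (∫ v : ℝ, E v * F (v + s))
      = Complex.exp (((-(2*π*x)) * s : ℝ) * Complex.I) * ∫ v : ℝ, E v * F v := by
    intro s
    have h1 : ∀ v : ℝ, E v * F (v + s)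
        = (fun t => Complex.exp (((-(2*π*x)) * s : ℝ) * Complex.I) * (E t * F t)) (v + s) := by
      intro v
      simp only [hE]
      rw [mul_assoc, ← mul_assoc (Complex.exp _), ← Complex.exp_add]
      congr 2
      push_cast
      ring
    simp_rw [h1]
    rw [MeasureTheory.integral_add_right_eq_self
      (fun t => Complex.exp (((-(2*π*x)) * s : ℝ) * Complex.I) * (E t * F t)) s]
    rw [MeasureTheory.integral_const_mul]
  calc ∫ v : ℝ, E v * G v
      = ∫ v : ℝ, ((π * a : ℝ) : ℂ) * (E v * ∫ s in Set.Ioc (-δ) δ, F (v + s)) := by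
        congr 1; funext v; rw [hGdef]; simp only; rw [hrw v]; ring
    _ = ((π * a : ℝ) : ℂ) * ∫ v : ℝ, E v * ∫ s in Set.Ioc (-δ) δ, F (v + s) := by
        rw [MeasureTheory.integral_const_mul]
    _ = ((π * a : ℝ) : ℂ) * ∫ v : ℝ, ∫ s in Set.Ioc (-δ) δ, E v * F (v + s) := by
        congr 1
        refine MeasureTheory.integral_congr_ae (Filter.Eventually.of_forall fun v => ?_)
        exact (MeasureTheory.integral_const_mul _ _).symm
    _ = ((π * a : ℝ) : ℂ) * ∫ s in Set.Ioc (-δ) δ, ∫ v : ℝ, E v * F (v + s) := by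
        rw [hswap]
    _ = ((π * a : ℝ) : ℂ) * ((∫ s in Set.Ioc (-δ) δ,
          Complex.exp (((-(2*π*x)) * s : ℝ) * Complex.I)) * ∫ v : ℝ, E v * F v) := by
        congr 1
        simp_rw [key]
        rw [MeasureTheory.integral_mul_const]
    _ = (sinc' (x / a) : ℝ) * ∫ v : ℝ, E v * F v := by
        rw [← intervalIntegral.integral_of_le (show -δ ≤ δ by linarith),
          integral_cexp_box _ hδ]
        have h1 : -(2*π*x) * δ = -(x/a) := by
          rw [hδdef]; field_simp
        rw [h1, sinc_neg]
        have h3 : (π * a) * (2 * δ) = 1 := by rw [hδdef]; field_simp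
        have h2 : ((π * a : ℝ) : ℂ) * (2 * (δ:ℂ) * ((sinc' (x/a) : ℝ):ℂ))
            = ((sinc' (x/a) : ℝ):ℂ) := by
          rw [show ((π * a : ℝ) : ℂ) * (2 * (δ:ℂ) * ((sinc' (x/a):ℝ):ℂ))
              = (((π * a) * (2 * δ) : ℝ) : ℂ) * ((sinc' (x/a):ℝ):ℂ) by push_cast; ring, h3]
          simp
        rw [← mul_assoc, h2]

lemma exists_F (n : ℕ) : ∃ F : ℝ → ℂ, Measurable F ∧ Integrable F ∧
    (0 < n → Continuous F) ∧
    (∀ ξ : ℝ, (∑ k ∈ Finset.range (n+1), 1 / (2*(k:ℝ)+1)) / (2*π) < |ξ| → F ξ = 0) ∧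
    ∀ x : ℝ, (∫ v : ℝ, Complex.exp ((2 * π * (v * x) : ℝ) * Complex.I) * F v)
        = ((∏ k ∈ Finset.range (n+1), sinc' (x / (2*(k:ℝ)+1)) : ℝ) : ℂ) := by
  have hπ : (0:ℝ) < π := Real.pi_pos
  induction n with
  | zero =>
    set δ₀ : ℝ := 1 / (2*π) with hδ₀
    have hδ₀pos : 0 < δ₀ := by positivity
    refine ⟨Set.indicator (Icc (-δ₀) δ₀) (fun _ => (π:ℂ)), ?_, ?_, by omega, ?_, ?_⟩
    · exact measurable_const.indicator measurableSet_Icc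
    · rw [integrable_indicator_iff measurableSet_Icc]
      exact integrableOn_const measure_Icc_lt_top.ne
    · intro ξ hξ
      have hsum : (∑ k ∈ Finset.range 1, 1 / (2*(k:ℝ)+1)) = 1 := by norm_num
      rw [hsum] at hξ
      apply Set.indicator_of_notMem
      rw [Set.mem_Icc]
      intro ⟨h1, h2⟩
      have : |ξ| ≤ δ₀ := abs_le.2 ⟨h1, h2⟩
      rw [hδ₀] at this
      linarith [hξ]
    · intro x
      have h1 : ∀ v : ℝ, Complex.exp ((2 * π * (v * x) : ℝ) * Complex.I)
            * Set.indicator (Icc (-δ₀) δ₀) (fun _ => (π:ℂ)) v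
          = Set.indicator (Icc (-δ₀) δ₀)
            (fun v => Complex.exp (((2*π*x) * v : ℝ) * Complex.I) * (π:ℂ)) v := by
        intro v
        rw [show (2 * π * (v * x) : ℝ) = (2*π*x) * v by ring]
        rcases Classical.em (v ∈ Icc (-δ₀) δ₀) with h | h
        · rw [Set.indicator_of_mem h, Set.indicator_of_mem h]
        · rw [Set.indicator_of_notMem h, Set.indicator_of_notMem h, mul_zero]
      simp_rw [h1]
      rw [MeasureTheory.integral_indicator measurableSet_Icc, integral_Icc_eq_integral_Ioc,
        ← intervalIntegral.integral_of_le (by linarith : -δ₀ ≤ δ₀),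
        intervalIntegral.integral_mul_const, integral_cexp_box _ hδ₀pos]
      have h2 : (2*π*x) * δ₀ = x := by rw [hδ₀]; field_simp
      have h3 : (2:ℂ) * (δ₀:ℂ) * ((sinc' x : ℝ):ℂ) * (π:ℂ)
          = (((2 * δ₀ * π : ℝ)):ℂ) * ((sinc' x : ℝ):ℂ) := by push_cast; ring
      have h4 : 2 * δ₀ * π = 1 := by rw [hδ₀]; field_simp
      rw [h2, h3, h4]
      simp [Finset.prod_range_one]
  | succ n ih =>
    obtain ⟨F, hFm, hFi, _, hFsupp, hFeq⟩ := ih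
    have hcnn : 0 ≤ (∑ k ∈ Finset.range (n+1), 1 / (2*(k:ℝ)+1)) / (2*π) := by
      apply div_nonneg _ (by positivity)
      apply Finset.sum_nonneg
      intro k _
      positivity
    have ha : (0:ℝ) < 2*((n:ℝ)+1)+1 := by positivity
    obtain ⟨G, hGm, hGi, hGc, hGsupp, hGeq⟩ := step hcnn hFm hFi hFsupp ha
    refine ⟨G, hGm, hGi, fun _ => hGc, ?_, ?_⟩
    · intro ξ hξ
      apply hGsupp
      have hsum : (∑ k ∈ Finset.range (n+2), 1 / (2*(k:ℝ)+1))
          = (∑ k ∈ Finset.range (n+1), 1 / (2*(k:ℝ)+1)) + 1 / (2*((n:ℝ)+1)+1) := by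
        rw [Finset.sum_range_succ]; push_cast; ring_nf
      have harith : (∑ k ∈ Finset.range (n+1), 1 / (2*(k:ℝ)+1)) / (2*π)
            + 1 / (2 * π * (2*((n:ℝ)+1)+1))
          = (∑ k ∈ Finset.range (n+2), 1 / (2*(k:ℝ)+1)) / (2*π) := by
        rw [hsum]
        field_simp
      rw [harith]
      exact hξ
    · intro x
      rw [hGeq x, hFeq x]
      have : (∏ k ∈ Finset.range (n+2), sinc' (x / (2*(k:ℝ)+1)))
          = sinc' (x / (2*((n:ℝ)+1)+1)) * ∏ k ∈ Finset.range (n+1), sinc' (x / (2*(k:ℝ)+1)) := by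
        rw [Finset.prod_range_succ]
        push_cast
        ring
      rw [this]
      push_cast
      ring

end BW

open scoped FourierTransform Topology
open Filter

theorem sinc_sum_eq_integral_le_six (N : ℕ) (h1 : 1 ≤ N) (h6 : N ≤ 6) :
    1 / 2 + ∑' n : ℕ, ∏ k ∈ Finset.range (N + 1),
        sinc' ((n + 1 : ℝ) / (2 * k + 1)) =
      ∫ x in Set.Ioi (0:ℝ), ∏ k ∈ Finset.range (N + 1),
        sinc' (x / (2 * k + 1)) := by
  classical
  have hπ : (0:ℝ) < π := Real.pi_pos
  set f : ℝ → ℝ := fun x => ∏ k ∈ Finset.range (N + 1), sinc' (x / (2 * (k:ℝ) + 1)) with hfdef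
  set fc : ℝ → ℂ := fun x => ((f x : ℝ) : ℂ) with hfcdef
  -- basic properties of f
  have hfcont : Continuous f := by
    apply continuous_finset_prod
    intro k _
    exact BW.continuous_sinc.comp (continuous_id.div_const _)
  have hfeven : ∀ x : ℝ, f (-x) = f x := by
    intro x
    apply Finset.prod_congr rfl
    intro k _
    rw [neg_div, BW.sinc_neg]
  have hf0 : f 0 = 1 := by
    apply Finset.prod_eq_one
    intro k _
    rw [zero_div, BW.sinc_zero]
  have hb1 : ∀ x : ℝ, |f x| ≤ 1 := by
    intro x
    rw [hfdef, Finset.abs_prod]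
    exact Finset.prod_le_one (fun k _ => abs_nonneg _) (fun k _ => BW.abs_sinc_le_one _)
  have hb3 : ∀ x : ℝ, x ≠ 0 → |f x| ≤ 3 / x ^ 2 := by
    intro x hx
    have hsub : ({0, 1} : Finset ℕ) ⊆ Finset.range (N + 1) := by
      intro k hk
      simp only [Finset.mem_insert, Finset.mem_singleton] at hk
      rcases hk with rfl | rfl <;> simp [Finset.mem_range] <;> omega
    have hsplit : (∏ k ∈ Finset.range (N+1) \ {0, 1}, |sinc' (x / (2 * (k:ℝ) + 1))|)
        * (∏ k ∈ ({0, 1} : Finset ℕ), |sinc' (x / (2 * (k:ℝ) + 1))|)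
        = ∏ k ∈ Finset.range (N+1), |sinc' (x / (2 * (k:ℝ) + 1))| :=
      Finset.prod_sdiff hsub
    have habs : |f x| = ∏ k ∈ Finset.range (N+1), |sinc' (x / (2 * (k:ℝ) + 1))| := by
      rw [hfdef, Finset.abs_prod]
    have hpair : ∏ k ∈ ({0, 1} : Finset ℕ), |sinc' (x / (2 * (k:ℝ) + 1))|
        = |sinc' x| * |sinc' (x / 3)| := by
      rw [Finset.prod_pair (by norm_num)]
      norm_num
    have hrest : (∏ k ∈ Finset.range (N+1) \ {0, 1}, |sinc' (x / (2 * (k:ℝ) + 1))|) ≤ 1 :=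
      Finset.prod_le_one (fun k _ => abs_nonneg _) (fun k _ => BW.abs_sinc_le_one _)
    have hx3 : x / 3 ≠ 0 := by simp [hx]
    have h2 : |sinc' x| * |sinc' (x / 3)| ≤ (1 / |x|) * (3 / |x|) := by
      apply mul_le_mul (BW.abs_sinc_le hx) _ (abs_nonneg _) (by positivity)
      calc |sinc' (x/3)| ≤ 1 / |x/3| := BW.abs_sinc_le hx3
        _ = 3 / |x| := by rw [abs_div]; simp
    calc |f x| = (∏ k ∈ Finset.range (N+1) \ {0, 1}, |sinc' (x / (2 * (k:ℝ) + 1))|)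
          * (|sinc' x| * |sinc' (x / 3)|) := by rw [habs, ← hsplit, hpair]
      _ ≤ 1 * ((1 / |x|) * (3 / |x|)) := by
          apply mul_le_mul hrest h2 (by positivity) zero_le_one
      _ = 3 / x ^ 2 := by
          rw [one_mul, div_mul_div_comm, one_mul, ← abs_mul, ← sq, _root_.abs_of_nonneg (sq_nonneg x)]
  have hb6 : ∀ x : ℝ, |f x| ≤ 6 * (1 + x ^ 2)⁻¹ := by
    intro x
    have hrw6 : 6 * (1 + x ^ 2)⁻¹ = 6 / (1 + x ^ 2) := by rw [div_eq_mul_inv]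
    rw [hrw6]
    rcases le_or_gt (x ^ 2) 1 with h | h
    · rw [le_div_iff₀ (by positivity)]
      nlinarith [hb1 x, abs_nonneg (f x)]
    · have hx : x ≠ 0 := by intro h0; rw [h0] at h; norm_num at h
      calc |f x| ≤ 3 / x ^ 2 := hb3 x hx
        _ ≤ 6 / (1 + x ^ 2) := by
          rw [div_le_div_iff₀ (by positivity) (by positivity)]
          nlinarith
  have hfi : Integrable f := by
    apply (integrable_inv_one_add_sq.const_mul 6).mono' hfcont.aestronglyMeasurable
    exact Filter.Eventually.of_forall fun x => by
      rw [Real.norm_eq_abs]; exact hb6 x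
  have hfci : Integrable fc := hfi.ofReal
  have hfccont : Continuous fc := Complex.continuous_ofReal.comp hfcont
  -- the Fourier transform F
  obtain ⟨F, hFm, hFi, hFcont', hFsupp, hFeq⟩ := BW.exists_F N
  have hFcont : Continuous F := hFcont' (by omega)
  have hc1 : (∑ k ∈ Finset.range (N+1), 1 / (2*(k:ℝ)+1)) / (2*π) < 1 := by
    have hle : (∑ k ∈ Finset.range (N+1), 1 / (2*(k:ℝ)+1))
        ≤ ∑ k ∈ Finset.range 7, 1 / (2*(k:ℝ)+1) := by
      apply Finset.sum_le_sum_of_subset_of_nonneg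
      · intro k hk; simp only [Finset.mem_range] at *; omega
      · intro k _ _; positivity
    have hval : (∑ k ∈ Finset.range 7, 1 / (2*(k:ℝ)+1)) < 2 := by
      simp [Finset.sum_range_succ]
      norm_num
    have h2π : (2:ℝ) < 2 * π := by linarith [Real.pi_gt_three]
    rw [div_lt_one (by positivity)]
    linarith
  -- fc is the inverse Fourier transform of F
  have hfcinv : fc = 𝓕⁻ F := by
    funext y
    rw [Real.fourierInv_eq']
    rw [hfcdef]
    simp only
    rw [← hFeq y]
    apply MeasureTheory.integral_congr_ae
    apply Filter.Eventually.of_forall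
    intro v
    simp only [smul_eq_mul, RCLike.inner_apply, conj_trivial, mul_comm v y]
  have h𝓕F : Integrable (𝓕 F) := by
    have heq : ∀ w : ℝ, 𝓕 F w = fc (-w) := by
      intro w
      have h := Real.fourierInv_eq_fourier_neg F (-w)
      rw [neg_neg] at h
      rw [← h, ← hfcinv]
    have : Integrable (fun w : ℝ => fc (-w)) := hfci.comp_neg
    exact this.congr (Filter.Eventually.of_forall fun w => (heq w).symm)
  have h𝓕fc : ∀ ξ : ℝ, 𝓕 fc ξ = F ξ := by
    intro ξ
    rw [hfcinv]
    exact hFi.fourier_fourierInv_eq h𝓕F hFcont.continuousAt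
  -- Big-O decay of fc
  have hO : fc =O[cocompact ℝ] fun x : ℝ => |x| ^ (-2 : ℝ) := by
    rw [Asymptotics.isBigO_iff]
    refine ⟨3, ?_⟩
    have hmem : {x : ℝ | 1 ≤ |x|} ∈ cocompact ℝ := by
      rw [mem_cocompact]
      refine ⟨Set.Icc (-1) 1, isCompact_Icc, ?_⟩
      intro x hx
      simp only [Set.mem_compl_iff, Set.mem_Icc, not_and_or, not_le] at hx
      simp only [Set.mem_setOf_eq]
      rcases hx with h | h
      · rw [abs_of_neg (by linarith)]; linarith
      · rw [abs_of_pos (by linarith)]; linarith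
    filter_upwards [hmem] with x hx
    have hx0 : x ≠ 0 := by
      intro h0; rw [h0] at hx; simp at hx; linarith
    have hn1 : ‖fc x‖ = |f x| := by
      rw [hfcdef]; simp [Complex.norm_real]
    have hn2 : ‖|x| ^ (-2 : ℝ)‖ = (x ^ 2)⁻¹ := by
      rw [Real.norm_eq_abs, _root_.abs_of_nonneg (Real.rpow_nonneg (abs_nonneg x) _),
        Real.rpow_neg (abs_nonneg x),
        show (2:ℝ) = ((2:ℕ):ℝ) by norm_num, Real.rpow_natCast, _root_.sq_abs]
    rw [hn1, hn2]
    calc |f x| ≤ 3 / x ^ 2 := hb3 x hx0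
      _ = 3 * (x ^ 2)⁻¹ := by rw [div_eq_mul_inv]
  have h𝓕zero : ∀ n : ℤ, n ≠ 0 → 𝓕 fc (n : ℝ) = 0 := by
    intro n hn
    rw [h𝓕fc]
    apply hFsupp
    have ha1 : (1 : ℤ) ≤ |n| := Int.one_le_abs (by simpa using hn)
    have ha2 : (1:ℝ) ≤ |(n:ℝ)| := by
      rw [← Int.cast_abs]; exact_mod_cast ha1
    linarith
  have hsummableF : Summable fun n : ℤ => 𝓕 fc (n : ℝ) := by
    apply summable_of_ne_finset_zero (s := ({0} : Finset ℤ))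
    intro n hn
    exact h𝓕zero n (by simpa using hn)
  have hPoisson := Real.tsum_eq_tsum_fourier_of_rpow_decay_of_summable
    hfccont (by norm_num : (1:ℝ) < 2) hO hsummableF 0
  -- RHS of Poisson
  have hRHS : (∑' n : ℤ, 𝓕 fc (n:ℝ) * (fourier n ((0:ℝ) : UnitAddCircle) : ℂ))
      = ((2 * ∫ x in Set.Ioi (0:ℝ), f x : ℝ) : ℂ) := by
    have h0 : ((0:ℝ) : UnitAddCircle) = 0 := by norm_num
    have hfour : ∀ n : ℤ, 𝓕 fc (n:ℝ) * (fourier n ((0:ℝ) : UnitAddCircle) : ℂ) = 𝓕 fc (n:ℝ) := by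
      intro n
      rw [h0, fourier_eval_zero, mul_one]
    rw [tsum_congr hfour]
    rw [tsum_eq_single (0 : ℤ) (fun n hn => h𝓕zero n hn)]
    have h𝓕0 : 𝓕 fc (((0:ℤ) : ℝ)) = ∫ v : ℝ, fc v := by
      push_cast
      rw [Real.fourier_eq]
      simp
    rw [h𝓕0]
    have hint2 : ∫ x : ℝ, f x = 2 * ∫ x in Set.Ioi (0:ℝ), f x := by
      rw [← integral_comp_abs (f := f)]
      apply MeasureTheory.integral_congr_ae
      apply Filter.Eventually.of_forall
      intro x
      show f x = f |x|
      rcases abs_choice x with h | h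
      · rw [h]
      · rw [h, hfeven]
    rw [show (∫ v : ℝ, fc v) = ((∫ v : ℝ, f v : ℝ) : ℂ) from _root_.integral_ofReal, hint2]
  -- LHS of Poisson
  have hsum_nat : Summable (fun n : ℕ => f ((n:ℝ) + 1)) := by
    have hg : Summable (fun n : ℕ => 3 * (((n:ℝ) + 1) ^ 2)⁻¹) := by
      have h0 : Summable (fun n : ℕ => (((n:ℝ)) ^ 2)⁻¹) := by
        have := Real.summable_one_div_nat_pow.2 (by norm_num : 1 < 2)
        simpa [one_div] using this
      have h1 := (summable_nat_add_iff 1).2 h0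
      have h2 : (fun n : ℕ => ((((n+1):ℕ):ℝ) ^ 2)⁻¹) = fun n : ℕ => (((n:ℝ) + 1) ^ 2)⁻¹ := by
        funext n; push_cast; ring_nf
      rw [h2] at h1
      exact h1.mul_left 3
    apply Summable.of_norm_bounded hg
    intro n
    have hpos : ((n:ℝ) + 1) ≠ 0 := by positivity
    rw [Real.norm_eq_abs]
    calc |f ((n:ℝ)+1)| ≤ 3 / ((n:ℝ)+1) ^ 2 := hb3 _ hpos
      _ = 3 * (((n:ℝ)+1) ^ 2)⁻¹ := by rw [div_eq_mul_inv]
  have hsum_c1 : Summable (fun n : ℕ => fc ((n:ℝ) + 1)) := by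
    rw [hfcdef]
    exact Complex.summable_ofReal.2 hsum_nat
  have hsplit := tsum_of_add_one_of_neg_add_one (f := fun n : ℤ => fc ((n:ℤ) : ℝ))
    (by
      apply hsum_c1.congr
      intro n
      congr 1
      push_cast
      ring)
    (by
      apply hsum_c1.congr
      intro n
      show fc ((n:ℝ) + 1) = fc (((-(((n:ℕ):ℤ)+1)) : ℤ) : ℝ)
      have harg : (((-(((n:ℕ):ℤ)+1)) : ℤ) : ℝ) = -(((n:ℝ)) + 1) := by push_cast; ring
      rw [harg]
      exact (congrArg Complex.ofReal (hfeven ((n:ℝ)+1))).symm)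
  have hts1 : (∑' n : ℕ, fc (((n:ℤ) + 1 : ℤ) : ℝ))
      = ((∑' n : ℕ, f ((n:ℝ) + 1) : ℝ) : ℂ) := by
    rw [Complex.ofReal_tsum]
    apply tsum_congr
    intro n
    congr 1
    push_cast
    ring
  have hts2 : (∑' n : ℕ, fc (((-((n:ℤ) + 1)) : ℤ) : ℝ))
      = ((∑' n : ℕ, f ((n:ℝ) + 1) : ℝ) : ℂ) := by
    rw [Complex.ofReal_tsum]
    apply tsum_congr
    intro n
    have harg : (((-(((n:ℕ):ℤ)+1)) : ℤ) : ℝ) = -(((n:ℝ)) + 1) := by push_cast; ring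
    rw [harg]
    exact congrArg Complex.ofReal (hfeven ((n:ℝ)+1))
  have hLHS : (∑' n : ℤ, fc ((0:ℝ) + (n:ℝ)))
      = ((∑' n : ℕ, f ((n:ℝ) + 1) : ℝ) : ℂ) + 1 + ((∑' n : ℕ, f ((n:ℝ) + 1) : ℝ) : ℂ) := by
    have hz : (fun n : ℤ => fc ((0:ℝ) + (n:ℝ))) = fun n : ℤ => fc ((n:ℤ) : ℝ) := by
      funext n; rw [zero_add]
    rw [hz, hsplit]
    beta_reduce
    have hfc0 : fc (((0:ℤ)) : ℝ) = 1 := by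
      show ((f (((0:ℤ)):ℝ) : ℝ) : ℂ) = 1
      norm_num [hf0]
    rw [hts1, hts2, hfc0]
  rw [hLHS, hRHS] at hPoisson
  have hreal : (∑' n : ℕ, f ((n:ℝ) + 1)) + 1 + (∑' n : ℕ, f ((n:ℝ) + 1))
      = 2 * ∫ x in Set.Ioi (0:ℝ), f x := by
    exact_mod_cast hPoisson
  show 1 / 2 + (∑' n : ℕ, f ((n:ℝ) + 1)) = ∫ x in Set.Ioi (0:ℝ), f x
  linarith
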